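/- If X is a metric subspace of a metric space Y (a subset of Y with the induced metric), then d∞(X) ≤ d∞(Y). -/

import Mathlib

open Metric Filter Set
open scoped ENNReal

/-- Least number of open balls of radius `r` (arbitrary centres) needed to cover `Ω`;
`⊤` if no finite cover exists. -/
noncomputable def coverNum {X : Type*} [MetricSpace X] (r : ℝ) (Ω : Set X) : ℕ∞ :=
  sInf ((fun s : Finset X => (s.card : ℕ∞)) '' {s | Ω ⊆ ⋃ y ∈ s, Metric.ball y r})

/-- Largest number of pairwise disjoint open balls of radius `r` with centres in `Ω`. -/
noncomputable def packNum {X : Type*} [MetricSpace X] (r : ℝ) (Ω : Set X) : ℕ∞ :=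
  sSup ((fun s : Finset X => (s.card : ℕ∞)) ''
    {s | ↑s ⊆ Ω ∧ (s : Set X).Pairwise fun a b => Disjoint (Metric.ball a r) (Metric.ball b r)})

/-- Logarithm of an extended natural number, valued in `[0,∞]`. -/
noncomputable def elog (n : ℕ∞) : ℝ≥0∞ :=
  if n = ⊤ then ⊤ else ENNReal.ofReal (Real.log n.toNat)

/-- The quantity `log n_r(B(x,R)) / log R`. -/
noncomputable def dimRatio {X : Type*} [MetricSpace X] (x : X) (r R : ℝ) : ℝ≥0∞ :=
  elog (coverNum r (Metric.ball x R)) / ENNReal.ofReal (Real.log R)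

/-- The asymptotic dimension computed at the base point `x`:
`lim_{r→∞} limsup_{R→∞} log n_r(B(x,R)) / log R`; since the inner expression is
nonincreasing in `r`, the limit equals the infimum over `r > 0`. -/
noncomputable def asympDimAt {X : Type*} [MetricSpace X] (x : X) : ℝ≥0∞ :=
  ⨅ (r : ℝ) (_ : 0 < r), Filter.limsup (fun R => dimRatio x r R) Filter.atTop

/-- The asymptotic dimension `d∞(X)` of a nonempty metric space. -/
noncomputable def asympDim (X : Type*) [MetricSpace X] [Nonempty X] : ℝ≥0∞ :=
  asympDimAt (Classical.arbitrary X)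

/-- Covering numbers are monotone in the set being covered. -/
lemma coverNum_mono {Z : Type*} [MetricSpace Z] {r : ℝ} {A B : Set Z} (h : A ⊆ B) :
    coverNum r A ≤ coverNum r B := by
  apply sInf_le_sInf
  apply Set.image_mono
  intro s hs
  exact h.trans hs

/-- `elog` is monotone. -/
lemma elog_mono : Monotone elog := by
  intro n m h
  unfold elog
  rcases eq_or_ne m ⊤ with hm | hm
  · simp [hm]
  · have hn : n ≠ ⊤ := fun h' => hm (top_le_iff.mp (h' ▸ h))
    rw [if_neg hn, if_neg hm]
    rcases Nat.eq_zero_or_pos n.toNat with h0 | h0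
    · simp [h0, Real.log_zero]
    · exact ENNReal.ofReal_le_ofReal (Real.log_le_log (by exact_mod_cast h0)
        (by exact_mod_cast ENat.toNat_le_toNat h hm))

/-- Transfer of covering numbers from a subspace to the ambient space (radius doubles). -/
lemma coverNum_ball_subtype {Y : Type*} [MetricSpace Y] {X : Set Y} [Nonempty X]
    (x : X) (r R : ℝ) :
    coverNum (2 * r) (Metric.ball x R) ≤ coverNum r (Metric.ball (x : Y) R) := by
  classical
  apply sInf_le_sInf_of_isCoinitialFor
  rintro b ⟨s, hs, rfl⟩
  let f : Y → X := fun y =>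
    if h : ∃ z : X, dist (z : Y) y < r then h.choose else Classical.arbitrary X
  refine ⟨((s.image f).card : ℕ∞), ⟨s.image f, ?_, rfl⟩, by simpa using (Nat.cast_le.mpr Finset.card_image_le : (((s.image f).card : ℕ∞)) ≤ (s.card : ℕ∞))⟩
  intro p hp
  have hp' : (p : Y) ∈ Metric.ball (x : Y) R := by
    rw [mem_ball] at hp ⊢
    rwa [Subtype.dist_eq] at hp
  obtain ⟨y, hys, hy⟩ := Set.mem_iUnion₂.mp (hs hp')
  rw [mem_ball] at hy
  have hex : ∃ z : X, dist (z : Y) y < r := ⟨p, hy⟩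
  have hfy : dist ((f y : X) : Y) y < r := by
    simp only [f, dif_pos hex]
    exact hex.choose_spec
  refine Set.mem_iUnion₂.mpr ⟨f y, Finset.mem_image_of_mem f hys, ?_⟩
  rw [mem_ball, Subtype.dist_eq]
  calc dist (p : Y) ((f y : X) : Y) ≤ dist (p : Y) y + dist y ((f y : X) : Y) := dist_triangle _ _ _
    _ < r + r := by rw [dist_comm y]; exact add_lt_add hy hfy
    _ = 2 * r := (two_mul r).symm

/-- Subspace step: at a point of the subspace, the asymptotic dimension is no larger. -/
lemma asympDimAt_subtype_le {Y : Type*} [MetricSpace Y] (X : Set Y) [Nonempty X] (x : X) :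
    asympDimAt x ≤ asympDimAt (x : Y) := by
  refine le_iInf₂ fun r hr => ?_
  have h2r : 0 < 2 * r := by linarith
  refine (iInf₂_le (2 * r) h2r).trans ?_
  refine Filter.limsup_le_limsup (Filter.Eventually.of_forall fun R => ?_)
  unfold dimRatio
  exact ENNReal.div_le_div_right (elog_mono (coverNum_ball_subtype x r R)) _

lemma le_of_forall_one_lt_ofReal_mul {a b : ℝ≥0∞}
    (h : ∀ k : ℝ, 1 < k → a ≤ ENNReal.ofReal k * b) : a ≤ b := by
  rcases eq_or_ne b ⊤ with hb | hb
  · simp [hb]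
  · have hseq : ∀ n : ℕ, a ≤ ENNReal.ofReal (1 + 1 / (n + 1)) * b := fun n =>
      h _ (by have : (0:ℝ) < 1 / (n + 1) := by positivity
              linarith)
    have h1 : Filter.Tendsto (fun n : ℕ => (1 : ℝ) + 1 / (n + 1)) atTop (nhds 1) := by
      have := tendsto_one_div_add_atTop_nhds_zero_nat (𝕜 := ℝ)
      have := this.const_add (1 : ℝ)
      simpa using this
    have h2 : Filter.Tendsto (fun n : ℕ => ENNReal.ofReal (1 + 1 / (n + 1))) atTop (nhds 1) := by
      have := ENNReal.tendsto_ofReal h1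
      simpa using this
    have h3 := ENNReal.Tendsto.mul_const (b := b) h2 (Or.inl one_ne_zero)
    rw [one_mul] at h3
    exact ge_of_tendsto' h3 hseq

/-- Changing base point: the key `limsup` estimate. -/
lemma limsup_dimRatio_shift {Y : Type*} [MetricSpace Y] (x y : Y) {r k : ℝ}
    (hk : 1 < k) :
    limsup (fun R => dimRatio x r R) atTop ≤
      ENNReal.ofReal k * limsup (fun R => dimRatio y r R) atTop := by
  set c := dist x y with hc_def
  have hc : 0 ≤ c := dist_nonneg
  set K := ENNReal.ofReal k with hK_def
  have hK0 : K ≠ 0 := by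
    simp only [hK_def, ne_eq, ENNReal.ofReal_eq_zero, not_le]
    linarith
  have hKt : K ≠ ⊤ := ENNReal.ofReal_ne_top
  have step1 : limsup (fun R => dimRatio x r R) atTop ≤
      limsup (fun R => K * dimRatio y r (R + c)) atTop := by
    refine Filter.limsup_le_limsup ?_
    have ev1 : ∀ᶠ R : ℝ in atTop, (2 : ℝ) ≤ R := eventually_ge_atTop 2
    have ev2 : ∀ᶠ R : ℝ in atTop, Real.log (1 + c) ≤ (k - 1) * Real.log R := by
      have ht : Filter.Tendsto (fun R : ℝ => (k - 1) * Real.log R) atTop atTop :=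
        (Real.tendsto_log_atTop).const_mul_atTop (by linarith)
      exact ht.eventually_ge_atTop _
    filter_upwards [ev1, ev2] with R hR2 hRlog
    -- pointwise estimate
    have hR1 : (1 : ℝ) < R := by linarith
    have hlogR : 0 < Real.log R := Real.log_pos hR1
    have hlog : Real.log (R + c) ≤ k * Real.log R := by
      have hRc : R + c ≤ R * (1 + c) := by nlinarith
      have h1 : Real.log (R + c) ≤ Real.log (R * (1 + c)) :=
        Real.log_le_log (by linarith) hRc
      have h2 : Real.log (R * (1 + c)) = Real.log R + Real.log (1 + c) :=
        Real.log_mul (by linarith) (by linarith)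
      calc Real.log (R + c) ≤ Real.log R + Real.log (1 + c) := by rw [← h2]; exact h1
        _ ≤ Real.log R + (k - 1) * Real.log R := by linarith
        _ = k * Real.log R := by ring
    have hball : Metric.ball x R ⊆ Metric.ball y (R + c) := by
      intro z hz
      rw [mem_ball] at hz ⊢
      calc dist z y ≤ dist z x + dist x y := dist_triangle _ _ _
        _ < R + c := by rw [← hc_def]; linarith
    set a := elog (coverNum r (Metric.ball y (R + c))) with ha_def
    set b := ENNReal.ofReal (Real.log R) with hb_def
    set d := ENNReal.ofReal (Real.log (R + c)) with hd_def
    have hb0 : b ≠ 0 := by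
      simp only [hb_def, ne_eq, ENNReal.ofReal_eq_zero, not_le]; exact hlogR
    have hbt : b ≠ ⊤ := ENNReal.ofReal_ne_top
    have hdKb : d ≤ K * b := by
      rw [hd_def, hb_def, hK_def, ← ENNReal.ofReal_mul (by linarith)]
      exact ENNReal.ofReal_le_ofReal hlog
    have key : a / b = K * (a / (K * b)) := by
      rw [div_eq_mul_inv, div_eq_mul_inv, ENNReal.mul_inv (Or.inl hK0) (Or.inl hKt),
        mul_left_comm K a, ← mul_assoc K, ENNReal.mul_inv_cancel hK0 hKt, one_mul]
    calc dimRatio x r R ≤ a / b :=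
          ENNReal.div_le_div_right (elog_mono (coverNum_mono hball)) _
      _ = K * (a / (K * b)) := key
      _ ≤ K * (a / d) := mul_le_mul_right (ENNReal.div_le_div_left hdKb a) K
      _ = K * dimRatio y r (R + c) := rfl
  have step2 : limsup (fun R => K * dimRatio y r (R + c)) atTop =
      K * limsup (fun R => dimRatio y r (R + c)) atTop :=
    ENNReal.limsup_const_mul_of_ne_top hKt
  have step3 : limsup (fun R => dimRatio y r (R + c)) atTop ≤
      limsup (fun R => dimRatio y r R) atTop := by
    have hmap : Filter.map (fun R : ℝ => R + c) atTop ≤ atTop :=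
      (tendsto_atTop_add_const_right atTop c tendsto_id)
    have : limsup (fun R => dimRatio y r (R + c)) atTop =
        limsup (fun R => dimRatio y r R) (Filter.map (fun R : ℝ => R + c) atTop) :=
      Filter.limsup_comp (fun R => dimRatio y r R) (fun R : ℝ => R + c) atTop
    rw [this]
    exact Filter.limsup_le_limsup_of_le hmap
  calc limsup (fun R => dimRatio x r R) atTop
      ≤ limsup (fun R => K * dimRatio y r (R + c)) atTop := step1
    _ = K * limsup (fun R => dimRatio y r (R + c)) atTop := step2
    _ ≤ K * limsup (fun R => dimRatio y r R) atTop := mul_le_mul_right step3 K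

/-- The asymptotic dimension does not depend on the base point (one inequality). -/
lemma asympDimAt_le_asympDimAt {Y : Type*} [MetricSpace Y] (x y : Y) :
    asympDimAt x ≤ asympDimAt y := by
  apply le_of_forall_one_lt_ofReal_mul
  intro k hk
  set K := ENNReal.ofReal k with hK_def
  have hK0 : K ≠ 0 := by
    simp only [hK_def, ne_eq, ENNReal.ofReal_eq_zero, not_le]; linarith
  have hKt : K ≠ ⊤ := ENNReal.ofReal_ne_top
  rw [mul_comm, ← ENNReal.div_le_iff_le_mul (Or.inl hK0) (Or.inl hKt)]
  refine le_iInf₂ fun r hr => ?_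
  rw [ENNReal.div_le_iff_le_mul (Or.inl hK0) (Or.inl hKt), mul_comm]
  exact (iInf₂_le r hr).trans (limsup_dimRatio_shift x y hk)

/-- If `X` is a (nonempty) metric subspace of `Y`, then `d∞(X) ≤ d∞(Y)`. -/
theorem asympDim_subset_le {Y : Type*} [MetricSpace Y] [Nonempty Y]
    (X : Set Y) [Nonempty X] :
    asympDim X ≤ asympDim Y := by
  calc asympDim X = asympDimAt (Classical.arbitrary X) := rfl
    _ ≤ asympDimAt ((Classical.arbitrary X : X) : Y) :=
        asympDimAt_subtype_le X (Classical.arbitrary X)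
    _ ≤ asympDimAt (Classical.arbitrary Y) := asympDimAt_le_asympDimAt _ _
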